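/- Let L be an n×n matrix over a commutative ring such that every column of L sums to 0 (i.e., Σ_i L_{ij} = 0 for every j). Then within each column the cofactors are all equal: for every j and all i, k, the (i,j) cofactor of L equals the (k,j) cofactor of L. -/

import Mathlib

/-- The `(i,j)` cofactor of an `(n+1) × (n+1)` matrix `L`: `(-1)^(i+j)` times the
determinant of the matrix obtained from `L` by deleting row `i` and column `j`. -/
def cofactor {R : Type} [CommRing R] {n : ℕ}
    (L : Matrix (Fin (n + 1)) (Fin (n + 1)) R) (i j : Fin (n + 1)) : R :=
  (-1 : R) ^ ((i : ℕ) + (j : ℕ)) * (L.submatrix i.succAbove j.succAbove).det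

lemma cofactor_eq_det_updateRow {R : Type} [CommRing R] {n : ℕ}
    (L : Matrix (Fin (n + 1)) (Fin (n + 1)) R) (i j : Fin (n + 1)) :
    cofactor L i j = (L.updateRow i (Pi.single j 1)).det := by
  rw [Matrix.det_succ_row _ i]
  rw [Finset.sum_eq_single j]
  · have hsub : (L.updateRow i (Pi.single j 1)).submatrix i.succAbove j.succAbove
        = L.submatrix i.succAbove j.succAbove := by
      ext a b
      simp [Matrix.updateRow_ne (Fin.succAbove_ne i a)]
    rw [hsub]
    simp [cofactor, Matrix.updateRow_self]
  · intro b _ hb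
    simp [Matrix.updateRow_self, Pi.single_eq_of_ne hb]
  · simp

/-- If every column of a square matrix `L` over a commutative ring sums to `0`,
then within each column the cofactors are all equal. -/
theorem cofactors_col_equal {R : Type} [CommRing R] {n : ℕ}
    (L : Matrix (Fin (n + 1)) (Fin (n + 1)) R)
    (hcol : ∀ j, ∑ i, L i j = 0)
    (i k j : Fin (n + 1)) :
    cofactor L i j = cofactor L k j := by
  rcases eq_or_ne i k with rfl | hik
  · rfl
  rw [cofactor_eq_det_updateRow, cofactor_eq_det_updateRow]
  set A := L.updateRow i (Pi.single j 1) with hA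
  have hrowsum : L k + ∑ m ∈ (Finset.univ.erase k).erase i, L m = -L i := by
    funext c
    have h := hcol c
    rw [← Finset.add_sum_erase _ _ (Finset.mem_univ i),
        ← Finset.add_sum_erase _ _ (Finset.mem_erase.mpr ⟨hik.symm, Finset.mem_univ k⟩)] at h
    have : (Finset.univ.erase i).erase k = (Finset.univ.erase k).erase i := by
      rw [Finset.erase_right_comm]
    rw [this] at h
    simp only [Pi.add_apply, Pi.neg_apply, Finset.sum_apply]
    have hs : (∑ m ∈ (Finset.univ.erase k).erase i, L m) c
        = ∑ x ∈ (Finset.univ.erase k).erase i, L x c := by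
      exact Finset.sum_apply _ _ _
    linear_combination h + hs
  have key : (A.updateRow k (-L i)).det = A.det := by
    have hknotin : k ∉ (Finset.univ.erase k).erase i :=
      fun h => (Finset.mem_erase.mp (Finset.mem_of_mem_erase h)).1 rfl
    have := Matrix.det_updateRow_sum_aux A ((Finset.univ.erase k).erase i) hknotin
      (fun _ => (1 : R)) 1
    simp only [one_smul] at this
    have hAm : ∀ m ∈ (Finset.univ.erase k).erase i, A m = L m := by
      intro m hm
      exact Matrix.updateRow_ne (Finset.mem_erase.mp hm).1
    rw [Finset.sum_congr rfl hAm] at this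
    have hAk : A k = L k := Matrix.updateRow_ne (Ne.symm hik)
    rw [hAk, hrowsum] at this
    simpa using this
  have hswap : (A.updateRow k (L i)).det = -(L.updateRow k (Pi.single j 1)).det := by
    have : A.updateRow k (L i) =
        (L.updateRow k (Pi.single j 1)).submatrix (Equiv.swap i k) id := by
      rw [hA]
      ext a b
      rcases eq_or_ne a k with rfl | hak
      · simp [Matrix.updateRow_self, Equiv.swap_apply_right, Matrix.updateRow_ne hik, hik]
      rcases eq_or_ne a i with rfl | hai
      · simp [Matrix.updateRow_apply, Equiv.swap_apply_left, hik, hak]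
      · simp [Matrix.updateRow_ne hak, Matrix.updateRow_ne hai,
          Equiv.swap_apply_of_ne_of_ne hai hak]
    rw [this, Matrix.det_permute, Equiv.Perm.sign_swap hik]
    simp
  have hneg : (A.updateRow k (-L i)).det = -(A.updateRow k (L i)).det := by
    have := Matrix.det_updateRow_smul A k (-1 : R) (L i)
    simpa using this
  rw [← key, hneg, hswap, neg_neg]
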